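/- Let R be a commutative ring, λ ∈ R, and let H = R[X,Y,1/(1+λX)] be the (noncommutative group scheme's commutative coordinate) Hopf algebra with Δ(X) = X⊗1 + (1+λX)⊗X, Δ(Y) = Y⊗1 + (1+λX)⊗Y, ε(X)=ε(Y)=0, S(X) = −X/(1+λX), S(Y) = −Y/(1+λX). Then these structure maps are well defined and satisfy the Hopf algebra axioms: Δ is coassociative on X and Y, ε is a counit, and the antipode identity m∘(S⊗id)∘Δ = η∘ε holds on X and on Y. -/

import Mathlib

open scoped TensorProduct

noncomputable section

/-- The coordinate ring `H = R[X,Y, 1/(1+λX)]` of `ℋ^{(λ)}_R`. -/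
abbrev HA (R : Type*) [CommRing R] (lam : R) : Type _ :=
  Localization.Away
    (1 + MvPolynomial.C lam * MvPolynomial.X 0 : MvPolynomial (Fin 2) R)

/-- The image of `X` in `H`. -/
def hX (R : Type*) [CommRing R] (lam : R) : HA R lam :=
  algebraMap (MvPolynomial (Fin 2) R) (HA R lam) (MvPolynomial.X 0)

/-- The image of `Y` in `H`. -/
def hY (R : Type*) [CommRing R] (lam : R) : HA R lam :=
  algebraMap (MvPolynomial (Fin 2) R) (HA R lam) (MvPolynomial.X 1)

section Aux
variable {R : Type*} [CommRing R] (lam : R)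

/-- Extend an algebra map on the polynomial ring to the localization. -/
noncomputable def auxExtend {A : Type*} [CommRing A] [Algebra R A]
    (φ : MvPolynomial (Fin 2) R →ₐ[R] A)
    (h : IsUnit (φ (1 + MvPolynomial.C lam * MvPolynomial.X 0))) :
    HA R lam →ₐ[R] A :=
  IsLocalization.liftAlgHom (M := Submonoid.powers (1 + MvPolynomial.C lam * MvPolynomial.X 0))
    (f := φ) (fun y => by
      obtain ⟨n, hn⟩ := y.2
      rw [← hn, map_pow]
      exact h.pow n)

lemma auxExtend_apply {A : Type*} [CommRing A] [Algebra R A]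
    (φ : MvPolynomial (Fin 2) R →ₐ[R] A)
    (h : IsUnit (φ (1 + MvPolynomial.C lam * MvPolynomial.X 0)))
    (p : MvPolynomial (Fin 2) R) :
    auxExtend lam φ h (algebraMap (MvPolynomial (Fin 2) R) (HA R lam) p) = φ p := by
  simp [auxExtend, IsLocalization.liftAlgHom_apply, IsLocalization.lift_eq]

lemma aux_isUnit_u :
    IsUnit (1 + algebraMap R (HA R lam) lam * hX R lam) := by
  have := IsLocalization.map_units (M := Submonoid.powers
      (1 + MvPolynomial.C lam * MvPolynomial.X 0 : MvPolynomial (Fin 2) R)) (HA R lam)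
      ⟨_, Submonoid.mem_powers _⟩
  have e : 1 + algebraMap R (HA R lam) lam * hX R lam = algebraMap (MvPolynomial (Fin 2) R) (HA R lam)
      (1 + MvPolynomial.C lam * MvPolynomial.X 0) := by
    rw [map_add, map_one, map_mul, IsScalarTower.algebraMap_apply R (MvPolynomial (Fin 2) R) (HA R lam),
      MvPolynomial.algebraMap_eq]
    rfl
  rw [e]; exact this

end Aux

set_option maxHeartbeats 2000000 in
theorem stmt3 (R : Type*) [CommRing R] (lam : R) :
    ∃ (Δ : HA R lam →ₐ[R] HA R lam ⊗[R] HA R lam) (ε : HA R lam →ₐ[R] R)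
      (S : HA R lam →ₐ[R] HA R lam),
      -- values on the generators
      Δ (hX R lam) = hX R lam ⊗ₜ 1 +
        (1 + algebraMap R (HA R lam) lam * hX R lam) ⊗ₜ hX R lam ∧
      Δ (hY R lam) = hY R lam ⊗ₜ 1 +
        (1 + algebraMap R (HA R lam) lam * hX R lam) ⊗ₜ hY R lam ∧
      ε (hX R lam) = 0 ∧ ε (hY R lam) = 0 ∧
      (1 + algebraMap R (HA R lam) lam * hX R lam) * S (hX R lam) = - hX R lam ∧
      (1 + algebraMap R (HA R lam) lam * hX R lam) * S (hY R lam) = - hY R lam ∧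
      -- coassociativity on X and Y
      (∀ t ∈ ({hX R lam, hY R lam} : Set (HA R lam)),
        (Algebra.TensorProduct.assoc R R R (HA R lam) (HA R lam) (HA R lam))
            ((Algebra.TensorProduct.map Δ (AlgHom.id R _)) (Δ t))
          = (Algebra.TensorProduct.map (AlgHom.id R _) Δ) (Δ t)) ∧
      -- counit axiom on X and Y
      (∀ t ∈ ({hX R lam, hY R lam} : Set (HA R lam)),
        (Algebra.TensorProduct.lid R (HA R lam))
            ((Algebra.TensorProduct.map ε (AlgHom.id R _)) (Δ t)) = t) ∧
      -- antipode axiom `m ∘ (S ⊗ id) ∘ Δ = η ∘ ε` on X and Y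
      (∀ t ∈ ({hX R lam, hY R lam} : Set (HA R lam)),
        (Algebra.TensorProduct.lmul' R)
            ((Algebra.TensorProduct.map S (AlgHom.id R _)) (Δ t))
          = algebraMap R (HA R lam) (ε t)) := by
  haveI : LeftDistribClass (HA R lam ⊗[R] HA R lam) := by
    exact Distrib.leftDistribClass (HA R lam ⊗[R] HA R lam)
  set x := hX R lam with hxdef
  set y := hY R lam with hydef
  set c : HA R lam := algebraMap R (HA R lam) lam with hcdef
  set u : HA R lam := 1 + c * x with hudef
  have hu : IsUnit u := aux_isUnit_u lam
  obtain ⟨v, huv, hvu⟩ : ∃ v, u * v = 1 ∧ v * u = 1 :=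
    ⟨↑hu.unit⁻¹, hu.mul_val_inv, hu.val_inv_mul⟩
  have hcx : c * x = lam • x := (Algebra.smul_def _ _).symm
  have hc_alg : c = algebraMap (MvPolynomial (Fin 2) R) (HA R lam) (MvPolynomial.C lam) := by
    rw [hcdef, IsScalarTower.algebraMap_apply R (MvPolynomial (Fin 2) R) (HA R lam),
      MvPolynomial.algebraMap_eq]
  have hu_alg : u = algebraMap (MvPolynomial (Fin 2) R) (HA R lam)
      (1 + MvPolynomial.C lam * MvPolynomial.X 0) := by
    rw [map_add, map_one, map_mul, ← hc_alg, hudef]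
    rfl
  -- comultiplication
  have sw : ∀ a b : HA R lam, (c * a) ⊗ₜ[R] b = a ⊗ₜ[R] (c * b) := fun a b => by
    rw [hcdef, ← Algebra.smul_def, ← Algebra.smul_def, TensorProduct.smul_tmul]
  have halg : algebraMap R (HA R lam ⊗[R] HA R lam) lam = c ⊗ₜ 1 := by
    rw [Algebra.TensorProduct.algebraMap_apply, hcdef]
  have hφΔ : (MvPolynomial.aeval ![x ⊗ₜ[R] 1 + u ⊗ₜ[R] x, y ⊗ₜ[R] 1 + u ⊗ₜ[R] y] :
      MvPolynomial (Fin 2) R →ₐ[R] HA R lam ⊗[R] HA R lam)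
      (1 + MvPolynomial.C lam * MvPolynomial.X 0) = u ⊗ₜ u := by
    simp only [map_add, map_one, map_mul, MvPolynomial.aeval_C, MvPolynomial.aeval_X,
      Matrix.cons_val_zero]
    rw [halg, hudef]
    have sw1 : c ⊗ₜ[R] x = 1 ⊗ₜ[R] (c * x) := by
      rw [show c ⊗ₜ[R] x = (c * 1) ⊗ₜ[R] x by rw [mul_one], sw]
    have sw2 : (c * (c * x)) ⊗ₜ[R] x = (c * x) ⊗ₜ[R] (c * x) := sw _ _
    simp only [mul_add, mul_one, Algebra.TensorProduct.tmul_mul_tmul, one_mul,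
      Algebra.TensorProduct.one_def, TensorProduct.tmul_add, TensorProduct.add_tmul, sw1, sw2]
    abel
  set Δ : HA R lam →ₐ[R] HA R lam ⊗[R] HA R lam :=
    auxExtend lam (MvPolynomial.aeval ![x ⊗ₜ[R] 1 + u ⊗ₜ[R] x, y ⊗ₜ[R] 1 + u ⊗ₜ[R] y])
      (by
        rw [hφΔ]
        exact IsUnit.of_mul_eq_one (a := u ⊗ₜ[R] u) (v ⊗ₜ[R] v)
          (by rw [Algebra.TensorProduct.tmul_mul_tmul, huv]
              exact Algebra.TensorProduct.one_def.symm)) with hΔdef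
  have keyΔ : ∀ p, Δ (algebraMap (MvPolynomial (Fin 2) R) (HA R lam) p)
      = (MvPolynomial.aeval ![x ⊗ₜ[R] 1 + u ⊗ₜ[R] x, y ⊗ₜ[R] 1 + u ⊗ₜ[R] y] :
        MvPolynomial (Fin 2) R →ₐ[R] HA R lam ⊗[R] HA R lam) p :=
    fun p => auxExtend_apply lam _ _ p
  have hΔX : Δ x = x ⊗ₜ 1 + u ⊗ₜ x := by
    have h := keyΔ (MvPolynomial.X 0)
    simp only [MvPolynomial.aeval_X, Matrix.cons_val_zero] at h
    exact h
  have hΔY : Δ y = y ⊗ₜ 1 + u ⊗ₜ y := by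
    have h := keyΔ (MvPolynomial.X 1)
    simp only [MvPolynomial.aeval_X, Matrix.cons_val_one, Matrix.head_cons] at h
    exact h
  have hΔu : Δ u = u ⊗ₜ u := by
    nth_rewrite 1 [hu_alg]
    exact (keyΔ _).trans hφΔ
  -- counit
  have hφε : (MvPolynomial.aeval ![(0 : R), 0] : MvPolynomial (Fin 2) R →ₐ[R] R)
      (1 + MvPolynomial.C lam * MvPolynomial.X 0) = 1 := by
    simp
  set ε : HA R lam →ₐ[R] R :=
    auxExtend lam (MvPolynomial.aeval ![(0 : R), 0])
      (by rw [hφε]; exact isUnit_one) with hεdef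
  have keyε : ∀ p, ε (algebraMap (MvPolynomial (Fin 2) R) (HA R lam) p)
      = (MvPolynomial.aeval ![(0 : R), 0] : MvPolynomial (Fin 2) R →ₐ[R] R) p :=
    fun p => auxExtend_apply lam _ _ p
  have hεX : ε x = 0 := by
    have h := keyε (MvPolynomial.X 0)
    simp only [MvPolynomial.aeval_X, Matrix.cons_val_zero] at h
    exact h
  have hεY : ε y = 0 := by
    have h := keyε (MvPolynomial.X 1)
    simp only [MvPolynomial.aeval_X, Matrix.cons_val_one, Matrix.head_cons] at h
    exact h
  have hεu : ε u = 1 := by rw [hu_alg]; exact (keyε _).trans hφε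
  -- antipode
  have hφS : (MvPolynomial.aeval ![-(x * v), -(y * v)] : MvPolynomial (Fin 2) R →ₐ[R] HA R lam)
      (1 + MvPolynomial.C lam * MvPolynomial.X 0) = v := by
    simp only [map_add, map_one, map_mul, MvPolynomial.aeval_C, MvPolynomial.aeval_X,
      Matrix.cons_val_zero, ← hcdef]
    have h1 : c * -(x * v) = -(c * x * v) := by ring
    have h2 : c * x = u - 1 := by rw [hudef]; ring
    rw [h1, h2, sub_mul, one_mul, huv]
    ring
  set S : HA R lam →ₐ[R] HA R lam :=
    auxExtend lam (MvPolynomial.aeval ![-(x * v), -(y * v)])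
      (by rw [hφS]; exact IsUnit.of_mul_eq_one (a := v) u hvu) with hSdef
  have keyS : ∀ p, S (algebraMap (MvPolynomial (Fin 2) R) (HA R lam) p)
      = (MvPolynomial.aeval ![-(x * v), -(y * v)] : MvPolynomial (Fin 2) R →ₐ[R] HA R lam) p :=
    fun p => auxExtend_apply lam _ _ p
  have hSX : S x = -(x * v) := by
    have h := keyS (MvPolynomial.X 0)
    simp only [MvPolynomial.aeval_X, Matrix.cons_val_zero] at h
    exact h
  have hSY : S y = -(y * v) := by
    have h := keyS (MvPolynomial.X 1)
    simp only [MvPolynomial.aeval_X, Matrix.cons_val_one, Matrix.head_cons] at h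
    exact h
  have hSu : S u = v := by rw [hu_alg]; exact (keyS _).trans hφS
  refine ⟨Δ, ε, S, hΔX, hΔY, hεX, hεY, ?_, ?_, ?_, ?_, ?_⟩
  · rw [hSX, show u * -(x * v) = -(x * (u * v)) by ring, huv]; ring
  · rw [hSY, show u * -(y * v) = -(y * (u * v)) by ring, huv]; ring
  · rintro t (rfl | rfl)
    · rw [hΔX]
      simp only [map_add, Algebra.TensorProduct.map_tmul, AlgHom.coe_id, id_eq,
        hΔX, hΔu, map_one]
      simp only [TensorProduct.add_tmul, TensorProduct.tmul_add, map_add,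
        Algebra.TensorProduct.assoc_tmul, Algebra.TensorProduct.one_def]
      abel
    · rw [hΔY]
      simp only [map_add, Algebra.TensorProduct.map_tmul, AlgHom.coe_id, id_eq,
        hΔY, hΔu, map_one]
      simp only [TensorProduct.add_tmul, TensorProduct.tmul_add, map_add,
        Algebra.TensorProduct.assoc_tmul, Algebra.TensorProduct.one_def]
      abel
  · rintro t (rfl | rfl)
    · rw [hΔX]; simp [hεX, hεu]
    · rw [hΔY]; simp [hεY, hεu]
  · rintro t (rfl | rfl)
    · rw [hΔX]
      simp only [map_add, Algebra.TensorProduct.map_tmul, AlgHom.coe_id, id_eq,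
        Algebra.TensorProduct.lmul'_apply_tmul, hSX, hSu, hεX, map_zero, mul_one]
      ring
    · rw [hΔY]
      simp only [map_add, Algebra.TensorProduct.map_tmul, AlgHom.coe_id, id_eq,
        Algebra.TensorProduct.lmul'_apply_tmul, hSY, hSu, hεY, map_zero, mul_one]
      ring
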